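/- arXiv:math/0309279 — 2 statements merged into one kernel-verified Lean document; each statement's English description precedes it below -/
import Mathlib

section
/- Fix nonzero complex quasiperiods ω1, ω2 with Im(ω1/ω2) > 0, and fix u ∈ ℂ such that e^{2πi u/ω2} ∉ {q^{−j} : j ≥ 0} and e^{−2πi u/ω1} ∉ {q̃^{−j} r^{−k−1}} (so that both sides are defined). Then, as ω3 tends to infinity in such a way that Im(ω3/ω1) → +∞ and Im(ω3/ω2) → +∞ (so p = e^{2πi ω3/ω2} → 0 and r = e^{2πi ω3/ω1} → 0), the reciprocal 1/G(u; ω1, ω2, ω3) of the modified elliptic gamma function converges to the double sine function S(u; ω1, ω2) = (e^{2πi u/ω2}; q)_∞ / (e^{2πi u/ω1} q̃; q̃)_∞. -/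
open Complex Filter Topology

namespace Stmt9Aux

variable {ι : Type*}

/-- Division version of `HasProd.mul` in a topological field. -/
theorem hasProd_div {f g : ι → ℂ} {a b : ℂ} (hf : HasProd f a) (hg : HasProd g b)
    (hb : b ≠ 0) : HasProd (fun i => f i / g i) (a / b) := by
  have h : Tendsto (fun s : Finset ι => ∏ i ∈ s, (f i / g i)) atTop (nhds (a / b)) := by
    simp only [Finset.prod_div_distrib]
    exact Filter.Tendsto.div hf hg hb
  exact h

/-- Multipliability + exp/log representation when all factors are nonzero. -/
theorem mult_one_add_of_ne {f : ι → ℂ} (hf : Summable fun i => ‖f i‖)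
    (hne : ∀ i, 1 + f i ≠ 0) :
    Multipliable (fun i => 1 + f i) ∧
      (∏' i, (1 + f i)) = Complex.exp (∑' i, Complex.log (1 + f i)) := by
  have hlog : Summable fun i => Complex.log (1 + f i) := by
    refine Summable.of_norm_bounded_eventually (hf.mul_left (3/2)) ?_
    have hsmall : ∀ᶠ i in cofinite, ‖f i‖ ≤ 1/2 := by
      have := hf.tendsto_cofinite_zero
      have h2 := this.eventually (eventually_le_nhds (by norm_num : (0:ℝ) < 1/2))
      simpa using h2
    filter_upwards [hsmall] with i hi
    exact Complex.norm_log_one_add_half_le_self hi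
  have hprod := Complex.cexp_tsum_eq_tprod (f := fun i => 1 + f i) hne hlog
  have h1 : Multipliable (fun i => 1 + f i) :=
    Complex.multipliable_of_summable_log hlog
  exact ⟨h1, hprod.symm⟩

/-- Multipliability of `∏ (1 + f i)` for absolutely summable `f`, zeros allowed. -/
theorem mult_one_add {f : ι → ℂ} (hf : Summable fun i => ‖f i‖) :
    Multipliable (fun i => 1 + f i) := by
  classical
  set f' : ι → ℂ := fun i => if 1 + f i = 0 then 0 else f i with hf'
  set h : ι → ℂ := fun i => if 1 + f i = 0 then 0 else 1 with hh
  have hZ : {i | 1 + f i = 0}.Finite := by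
    have := hf.tendsto_cofinite_zero
    have h2 := this.eventually (eventually_lt_nhds (by norm_num : (0:ℝ) < 1))
    rw [eventually_cofinite] at h2
    refine h2.subset ?_
    intro i hi
    simp only [Set.mem_setOf_eq] at hi ⊢
    have : f i = -1 := by linear_combination hi
    simp [this]
  have hmf' : Multipliable (fun i => 1 + f' i) := by
    refine (mult_one_add_of_ne ?_ ?_).1
    · refine hf.of_norm_bounded ?_
      intro i
      simp only [hf']
      split <;> simp [norm_norm]
    · intro i
      simp only [hf']
      split_ifs with hc
      · norm_num
      · exact hc
  have hmh : Multipliable h := by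
    refine multipliable_of_ne_finset_one (s := hZ.toFinset) ?_
    intro i hi
    simp only [Set.Finite.mem_toFinset, Set.mem_setOf_eq] at hi
    simp [hh, hi]
  have : (fun i => 1 + f i) = fun i => (1 + f' i) * h i := by
    funext i
    simp only [hf', hh]
    split_ifs with hc
    · simp [hc]
    · ring
  rw [this]
  exact hmf'.mul hmh

/-- A multipliable-type product with a zero factor is zero. -/
theorem tprod_eq_zero {f : ι → ℂ} (hf : Summable fun i => ‖f i‖) {i₀ : ι}
    (h0 : 1 + f i₀ = 0) : (∏' i, (1 + f i)) = 0 := by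
  classical
  set f' : ι → ℂ := fun i => if 1 + f i = 0 then 0 else f i with hf'
  set h : ι → ℂ := fun i => if 1 + f i = 0 then 0 else 1 with hh
  have hZ : {i | 1 + f i = 0}.Finite := by
    have := hf.tendsto_cofinite_zero
    have h2 := this.eventually (eventually_lt_nhds (by norm_num : (0:ℝ) < 1))
    rw [eventually_cofinite] at h2
    refine h2.subset ?_
    intro i hi
    simp only [Set.mem_setOf_eq] at hi ⊢
    have : f i = -1 := by linear_combination hi
    simp [this]
  have hmf' : Multipliable (fun i => 1 + f' i) := by
    refine (mult_one_add_of_ne ?_ ?_).1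
    · refine hf.of_norm_bounded ?_
      intro i
      simp only [hf']
      split <;> simp [norm_norm]
    · intro i
      simp only [hf']
      split_ifs with hc
      · norm_num
      · exact hc
  have hmh : Multipliable h := by
    refine multipliable_of_ne_finset_one (s := hZ.toFinset) ?_
    intro i hi
    simp only [Set.Finite.mem_toFinset, Set.mem_setOf_eq] at hi
    simp [hh, hi]
  have heq : (fun i => 1 + f i) = fun i => (1 + f' i) * h i := by
    funext i
    simp only [hf', hh]
    split_ifs with hc
    · simp [hc]
    · ring
  rw [heq, Multipliable.tprod_mul hmf' hmh]
  have : (∏' i, h i) = 0 := by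
    rw [tprod_eq_prod (s := hZ.toFinset) ?_]
    · refine Finset.prod_eq_zero (i := i₀) ?_ ?_
      · simpa [Set.Finite.mem_toFinset] using h0
      · simp [hh, h0]
    · intro i hi
      simp only [Set.Finite.mem_toFinset, Set.mem_setOf_eq] at hi
      simp [hh, hi]
  rw [this, mul_zero]

/-- Nonvanishing of a product with nonzero factors. -/
theorem tprod_ne_zero {f : ι → ℂ} (hf : Summable fun i => ‖f i‖)
    (hne : ∀ i, 1 + f i ≠ 0) : (∏' i, (1 + f i)) ≠ 0 := by
  rw [(mult_one_add_of_ne hf hne).2]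
  exact Complex.exp_ne_zero _


/-- Quantitative bound on an infinite product of `1 + f i` with small total mass. -/
theorem tprod_sub_one_bound {f : ι → ℂ} {g : ι → ℝ} (hb : ∀ i, ‖f i‖ ≤ g i)
    (hg : Summable g) (hsum : ∑' i, g i ≤ 1/2) :
    ‖(∏' i, (1 + f i)) - 1‖ ≤ 3 * ∑' i, g i := by
  have hgnn : ∀ i, 0 ≤ g i := fun i => le_trans (norm_nonneg _) (hb i)
  have hsmall : ∀ i, ‖f i‖ ≤ 1/2 := fun i =>
    le_trans (hb i) (le_trans (Summable.le_tsum hg i fun j _ => hgnn j) hsum)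
  have hfs : Summable fun i => ‖f i‖ := hg.of_norm_bounded (by
    intro i; rw [Real.norm_eq_abs, _root_.abs_of_nonneg (norm_nonneg _)]; exact hb i)
  have hne : ∀ i, 1 + f i ≠ 0 := by
    intro i h
    have : (1:ℝ) ≤ ‖f i‖ := by
      have : f i = -1 := by linear_combination h
      simp [this]
    linarith [hsmall i]
  have hlogb : ∀ i, ‖Complex.log (1 + f i)‖ ≤ (3/2) * g i := fun i =>
    le_trans (Complex.norm_log_one_add_half_le_self (hsmall i))
      (by nlinarith [hb i, norm_nonneg (f i)])
  have hlogs : Summable fun i => Complex.log (1 + f i) :=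
    Summable.of_norm_bounded (hg.mul_left (3/2)) hlogb
  have hS : ‖∑' i, Complex.log (1 + f i)‖ ≤ (3/2) * ∑' i, g i := by
    refine le_trans (norm_tsum_le_tsum_norm (hlogs.norm)) ?_
    rw [← tsum_mul_left]
    exact Summable.tsum_le_tsum hlogb hlogs.norm (hg.mul_left _)
  rw [(mult_one_add_of_ne hfs hne).2]
  have hS1 : ‖∑' i, Complex.log (1 + f i)‖ ≤ 1 := le_trans hS (by linarith)
  calc ‖Complex.exp (∑' i, Complex.log (1 + f i)) - 1‖
      ≤ 2 * ‖∑' i, Complex.log (1 + f i)‖ := by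
        have := Complex.norm_exp_sub_one_le (x := ∑' i, Complex.log (1 + f i)) hS1
        simpa using this
    _ ≤ 3 * ∑' i, g i := by linarith

/-- Pointwise bound for the correction factor. -/
theorem quot_sub_one_bound {a b c d : ℂ} (ha : ‖a‖ ≤ 1/2) (hb : ‖b‖ ≤ 1/2)
    (hc : ‖c‖ ≤ 1/2) (hd : ‖d‖ ≤ 1/2) :
    ‖(1-a)*(1-b)/((1-c)*(1-d)) - 1‖ ≤ 6 * (‖a‖ + ‖b‖ + ‖c‖ + ‖d‖) := by
  have h1c : (1:ℝ)/2 ≤ ‖1 - c‖ := by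
    have := norm_sub_norm_le (1:ℂ) c
    simp only [norm_one] at this
    linarith
  have h1d : (1:ℝ)/2 ≤ ‖1 - d‖ := by
    have := norm_sub_norm_le (1:ℂ) d
    simp only [norm_one] at this
    linarith
  have hcd : (1:ℝ)/4 ≤ ‖(1-c)*(1-d)‖ := by
    rw [norm_mul]
    nlinarith
  have hcd0 : (1-c)*(1-d) ≠ 0 := by
    intro h
    rw [h, norm_zero] at hcd
    linarith
  have key : (1-a)*(1-b)/((1-c)*(1-d)) - 1
      = ((c + d - c*d) - (a + b - a*b)) / ((1-c)*(1-d)) := by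
    rw [div_sub_one hcd0]
    congr 1
    ring
  rw [key, norm_div]
  have hnum : ‖(c + d - c*d) - (a + b - a*b)‖ ≤ (3/2) * (‖a‖ + ‖b‖ + ‖c‖ + ‖d‖) := by
    have h1 : ‖(c + d - c*d) - (a + b - a*b)‖ ≤ ‖c‖ + ‖d‖ + ‖c‖*‖d‖ + (‖a‖ + ‖b‖ + ‖a‖*‖b‖) := by
      calc ‖(c + d - c*d) - (a + b - a*b)‖ ≤ ‖c + d - c*d‖ + ‖a + b - a*b‖ := norm_sub_le _ _
        _ ≤ (‖c‖ + ‖d‖ + ‖c‖*‖d‖) + (‖a‖ + ‖b‖ + ‖a‖*‖b‖) := by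
            gcongr <;>
            · refine le_trans (norm_sub_le _ _) ?_
              gcongr
              · exact norm_add_le _ _
              · rw [norm_mul]
    nlinarith [norm_nonneg a, norm_nonneg b, norm_nonneg c, norm_nonneg d]
  have h4 : ‖(1-c)*(1-d)‖⁻¹ ≤ 4 := by
    rw [inv_le_comm₀ (by linarith) (by norm_num)]
    linarith
  rw [div_eq_mul_inv]
  calc ‖(c + d - c*d) - (a + b - a*b)‖ * ‖(1-c)*(1-d)‖⁻¹
      ≤ ((3/2) * (‖a‖ + ‖b‖ + ‖c‖ + ‖d‖)) * 4 := by
        refine mul_le_mul hnum h4 (by positivity) (by positivity)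
    _ ≤ 6 * (‖a‖ + ‖b‖ + ‖c‖ + ‖d‖) := by nlinarith [norm_nonneg a, norm_nonneg b, norm_nonneg c, norm_nonneg d]


/-- "sub" wrappers -/
theorem mult_one_sub {f : ι → ℂ} (hf : Summable fun i => ‖f i‖) :
    Multipliable fun i => 1 - f i := by
  have h := mult_one_add (f := fun i => -f i) (by simpa using hf)
  exact h.congr fun i => by ring

theorem tprod_one_sub_ne_zero {f : ι → ℂ} (hf : Summable fun i => ‖f i‖)
    (hne : ∀ i, 1 - f i ≠ 0) : (∏' i, (1 - f i)) ≠ 0 := by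
  have h := tprod_ne_zero (f := fun i => -f i) (by simpa using hf)
    (fun i => by simpa [sub_eq_add_neg] using hne i)
  simpa [sub_eq_add_neg] using h

theorem tprod_one_sub_eq_zero {f : ι → ℂ} (hf : Summable fun i => ‖f i‖) {i₀ : ι}
    (h0 : 1 - f i₀ = 0) : (∏' i, (1 - f i)) = 0 := by
  have h := tprod_eq_zero (f := fun i => -f i) (hf := by simpa using hf) (i₀ := i₀)
    (by simpa [sub_eq_add_neg] using h0)
  simpa [sub_eq_add_neg] using h

/-- The correction factor. -/
noncomputable def Ef (A Q B T C D p r : ℂ) (jk : ℕ × ℕ) : ℂ :=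
  (1 - A*Q^(jk.1+1)*p^(jk.2+1)) * (1 - (if jk.2 = 0 then 0 else B*T^(jk.1+1)*r^jk.2)) /
  ((1 - (if jk.2 = 0 then 0 else C*Q^jk.1*p^jk.2)) * (1 - D*T^jk.1*r^(jk.2+1)))

noncomputable def wfun (A Q B T C D : ℂ) (j : ℕ) : ℝ :=
  ‖A‖*‖Q‖^(j+1) + ‖B‖*‖T‖^(j+1) + ‖C‖*‖Q‖^j + ‖D‖*‖T‖^j

theorem wfun_summable {A Q B T C D : ℂ} (hQ : ‖Q‖ < 1) (hT : ‖T‖ < 1) :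
    Summable (wfun A Q B T C D) := by
  have hQg := summable_geometric_of_lt_one (norm_nonneg Q) hQ
  have hTg := summable_geometric_of_lt_one (norm_nonneg T) hT
  have h1 : Summable (fun j : ℕ => ‖A‖*‖Q‖^(j+1)) :=
    (hQg.mul_left (‖A‖*‖Q‖)).congr fun j => by ring
  have h2 : Summable (fun j : ℕ => ‖B‖*‖T‖^(j+1)) :=
    (hTg.mul_left (‖B‖*‖T‖)).congr fun j => by ring
  have h3 : Summable (fun j : ℕ => ‖C‖*‖Q‖^j) := hQg.mul_left ‖C‖
  have h4 : Summable (fun j : ℕ => ‖D‖*‖T‖^j) := hTg.mul_left ‖D‖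
  exact ((h1.add h2).add h3).add h4

theorem wfun_nonneg (A Q B T C D : ℂ) (j : ℕ) : 0 ≤ wfun A Q B T C D j := by
  unfold wfun; positivity

set_option maxHeartbeats 1000000 in
/-- Pointwise bound on the correction factor. -/
theorem Ef_sub_one_bound {A Q B T C D p r : ℂ} (hQ : ‖Q‖ ≤ 1) (hT : ‖T‖ ≤ 1)
    (hp : ‖p‖ ≤ 1/2) (hr : ‖r‖ ≤ 1/2)
    (hA : ‖A‖*‖p‖ ≤ 1/2) (hB : ‖B‖*‖r‖ ≤ 1/2) (hC : ‖C‖*‖p‖ ≤ 1/2) (hD : ‖D‖*‖r‖ ≤ 1/2)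
    (jk : ℕ × ℕ) :
    ‖Ef A Q B T C D p r jk - 1‖ ≤ 12*(‖p‖+‖r‖) * wfun A Q B T C D jk.1 * (1/2)^jk.2 := by
  obtain ⟨j, k⟩ := jk
  have nA := norm_nonneg A; have nB := norm_nonneg B; have nC := norm_nonneg C
  have nD := norm_nonneg D; have np := norm_nonneg p; have nr := norm_nonneg r
  have nQ := norm_nonneg Q; have nT := norm_nonneg T
  have hQj : ∀ m : ℕ, ‖Q‖^m ≤ 1 := fun m => pow_le_one₀ nQ hQ
  have hTj : ∀ m : ℕ, ‖T‖^m ≤ 1 := fun m => pow_le_one₀ nT hT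
  have hhk : ∀ m : ℕ, (0:ℝ) ≤ (1/2)^m := fun m => by positivity
  have hhk1 : ∀ m : ℕ, ((1:ℝ)/2)^m ≤ 1 := fun m => pow_le_one₀ (by norm_num) (by norm_num)
  have hpk : ∀ m : ℕ, ‖p‖^(m+1) ≤ ‖p‖*(1/2)^m := by
    intro m
    have h1 : ‖p‖^m ≤ (1/2)^m := pow_le_pow_left₀ np hp m
    calc ‖p‖^(m+1) = ‖p‖ * ‖p‖^m := by ring
      _ ≤ ‖p‖ * (1/2)^m := mul_le_mul_of_nonneg_left h1 np
  have hrk : ∀ m : ℕ, ‖r‖^(m+1) ≤ ‖r‖*(1/2)^m := by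
    intro m
    have h1 : ‖r‖^m ≤ (1/2)^m := pow_le_pow_left₀ nr hr m
    calc ‖r‖^(m+1) = ‖r‖ * ‖r‖^m := by ring
      _ ≤ ‖r‖ * (1/2)^m := mul_le_mul_of_nonneg_left h1 nr
  have hna : ‖A*Q^(j+1)*p^(k+1)‖ ≤ ‖A‖*‖Q‖^(j+1)*(‖p‖*(1/2)^k) := by
    rw [norm_mul, norm_mul, norm_pow, norm_pow]
    exact mul_le_mul_of_nonneg_left (hpk k) (by positivity)
  have hnd : ‖D*T^j*r^(k+1)‖ ≤ ‖D‖*‖T‖^j*(‖r‖*(1/2)^k) := by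
    rw [norm_mul, norm_mul, norm_pow, norm_pow]
    exact mul_le_mul_of_nonneg_left (hrk k) (by positivity)
  have hnb : ‖if k = 0 then (0:ℂ) else B*T^(j+1)*r^k‖ ≤ ‖B‖*‖T‖^(j+1)*(2*‖r‖*(1/2)^k) := by
    split_ifs with hk
    · rw [norm_zero]; positivity
    · obtain ⟨m, rfl⟩ := Nat.exists_eq_succ_of_ne_zero hk
      rw [norm_mul, norm_mul, norm_pow, norm_pow]
      have h2 : ‖r‖^(m+1) ≤ 2*‖r‖*(1/2)^(m+1) := by
        rw [pow_succ ((1:ℝ)/2) m]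
        nlinarith [hrk m]
      exact mul_le_mul_of_nonneg_left h2 (by positivity)
  have hnc : ‖if k = 0 then (0:ℂ) else C*Q^j*p^k‖ ≤ ‖C‖*‖Q‖^j*(2*‖p‖*(1/2)^k) := by
    split_ifs with hk
    · rw [norm_zero]; positivity
    · obtain ⟨m, rfl⟩ := Nat.exists_eq_succ_of_ne_zero hk
      rw [norm_mul, norm_mul, norm_pow, norm_pow]
      have h2 : ‖p‖^(m+1) ≤ 2*‖p‖*(1/2)^(m+1) := by
        rw [pow_succ ((1:ℝ)/2) m]
        nlinarith [hpk m]
      exact mul_le_mul_of_nonneg_left h2 (by positivity)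
  have hsa : ‖A*Q^(j+1)*p^(k+1)‖ ≤ 1/2 := by
    refine le_trans hna (le_trans ?_ hA)
    have h7 : ‖Q‖^(j+1)*(1/2)^k ≤ 1 := mul_le_one₀ (hQj (j+1)) (hhk k) (hhk1 k)
    nlinarith [mul_nonneg nA np, pow_nonneg nQ (j+1), hhk k]
  have hsd : ‖D*T^j*r^(k+1)‖ ≤ 1/2 := by
    refine le_trans hnd (le_trans ?_ hD)
    have h7 : ‖T‖^j*(1/2)^k ≤ 1 := mul_le_one₀ (hTj j) (hhk k) (hhk1 k)
    nlinarith [mul_nonneg nD nr, pow_nonneg nT j, hhk k]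
  have hsb : ‖if k = 0 then (0:ℂ) else B*T^(j+1)*r^k‖ ≤ 1/2 := by
    split_ifs with hk
    · rw [norm_zero]; norm_num
    · obtain ⟨m, rfl⟩ := Nat.exists_eq_succ_of_ne_zero hk
      rw [norm_mul, norm_mul, norm_pow, norm_pow]
      have h1 : ‖r‖^(m+1) ≤ ‖r‖ := by
        nlinarith [hrk m, mul_nonneg nr (sub_nonneg.2 (hhk1 m))]
      calc ‖B‖*‖T‖^(j+1)*‖r‖^(m+1)
          ≤ ‖B‖*‖T‖^(j+1)*‖r‖ := mul_le_mul_of_nonneg_left h1 (by positivity)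
        _ = ‖B‖*‖r‖*‖T‖^(j+1) := by ring
        _ ≤ ‖B‖*‖r‖*1 := mul_le_mul_of_nonneg_left (hTj (j+1)) (mul_nonneg nB nr)
        _ = ‖B‖*‖r‖ := mul_one _
        _ ≤ 1/2 := hB
  have hsc : ‖if k = 0 then (0:ℂ) else C*Q^j*p^k‖ ≤ 1/2 := by
    split_ifs with hk
    · rw [norm_zero]; norm_num
    · obtain ⟨m, rfl⟩ := Nat.exists_eq_succ_of_ne_zero hk
      rw [norm_mul, norm_mul, norm_pow, norm_pow]
      have h1 : ‖p‖^(m+1) ≤ ‖p‖ := by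
        nlinarith [hpk m, mul_nonneg np (sub_nonneg.2 (hhk1 m))]
      calc ‖C‖*‖Q‖^j*‖p‖^(m+1)
          ≤ ‖C‖*‖Q‖^j*‖p‖ := mul_le_mul_of_nonneg_left h1 (by positivity)
        _ = ‖C‖*‖p‖*‖Q‖^j := by ring
        _ ≤ ‖C‖*‖p‖*1 := mul_le_mul_of_nonneg_left (hQj j) (mul_nonneg nC np)
        _ = ‖C‖*‖p‖ := mul_one _
        _ ≤ 1/2 := hC
  have step := quot_sub_one_bound hsa hsb hsc hsd
  have hEf : Ef A Q B T C D p r (j,k)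
      = (1-(A*Q^(j+1)*p^(k+1)))*(1-(if k = 0 then (0:ℂ) else B*T^(j+1)*r^k))
        / ((1-(if k = 0 then (0:ℂ) else C*Q^j*p^k))*(1-(D*T^j*r^(k+1)))) := rfl
  rw [hEf]
  refine le_trans step ?_
  have expand : 12*(‖p‖+‖r‖) * wfun A Q B T C D j * (1/2)^k
      = 6*(2*(‖p‖+‖r‖)*(‖A‖*‖Q‖^(j+1))*(1/2)^k) + 6*(2*(‖p‖+‖r‖)*(‖B‖*‖T‖^(j+1))*(1/2)^k)
        + 6*(2*(‖p‖+‖r‖)*(‖C‖*‖Q‖^j)*(1/2)^k) + 6*(2*(‖p‖+‖r‖)*(‖D‖*‖T‖^j)*(1/2)^k) := by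
    unfold wfun; ring
  rw [expand]
  have e1 : ‖A*Q^(j+1)*p^(k+1)‖ ≤ 2*(‖p‖+‖r‖)*(‖A‖*‖Q‖^(j+1))*(1/2)^k := by
    refine le_trans hna ?_
    nlinarith [mul_nonneg (mul_nonneg (mul_nonneg nA (pow_nonneg nQ (j+1))) np) (hhk k),
      mul_nonneg (mul_nonneg (mul_nonneg nA (pow_nonneg nQ (j+1))) nr) (hhk k)]
  have e2 : ‖if k = 0 then (0:ℂ) else B*T^(j+1)*r^k‖
      ≤ 2*(‖p‖+‖r‖)*(‖B‖*‖T‖^(j+1))*(1/2)^k := by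
    refine le_trans hnb ?_
    nlinarith [mul_nonneg (mul_nonneg (mul_nonneg nB (pow_nonneg nT (j+1))) np) (hhk k)]
  have e3 : ‖if k = 0 then (0:ℂ) else C*Q^j*p^k‖ ≤ 2*(‖p‖+‖r‖)*(‖C‖*‖Q‖^j)*(1/2)^k := by
    refine le_trans hnc ?_
    nlinarith [mul_nonneg (mul_nonneg (mul_nonneg nC (pow_nonneg nQ j)) nr) (hhk k)]
  have e4 : ‖D*T^j*r^(k+1)‖ ≤ 2*(‖p‖+‖r‖)*(‖D‖*‖T‖^j)*(1/2)^k := by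
    refine le_trans hnd ?_
    nlinarith [mul_nonneg (mul_nonneg (mul_nonneg nD (pow_nonneg nT j)) np) (hhk k),
      mul_nonneg (mul_nonneg (mul_nonneg nD (pow_nonneg nT j)) nr) (hhk k)]
  linarith


theorem gb_summable {A Q B T C D : ℂ} (hQ1 : ‖Q‖ < 1) (hT1 : ‖T‖ < 1) :
    Summable (fun jk : ℕ × ℕ => wfun A Q B T C D jk.1 * (1/2:ℝ)^jk.2) :=
  Summable.mul_of_nonneg (wfun_summable hQ1 hT1)
    (summable_geometric_of_lt_one (by norm_num) (by norm_num))
    (fun j => wfun_nonneg A Q B T C D j) (fun k => by positivity)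

theorem gb_tsum {A Q B T C D : ℂ} (hQ1 : ‖Q‖ < 1) (hT1 : ‖T‖ < 1) :
    ∑' jk : ℕ × ℕ, (wfun A Q B T C D jk.1 * (1/2:ℝ)^jk.2)
      = (∑' j, wfun A Q B T C D j) * 2 := by
  rw [← Summable.tsum_mul_tsum (wfun_summable hQ1 hT1)
    (summable_geometric_of_lt_one (by norm_num) (by norm_num)) (gb_summable hQ1 hT1)]
  rw [tsum_geometric_of_lt_one (by norm_num) (by norm_num)]
  norm_num

/-- Main estimate for the correction product. -/
theorem EP_est {A Q B T C D p r : ℂ} (hQ1 : ‖Q‖ < 1) (hT1 : ‖T‖ < 1)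
    (hp : ‖p‖ ≤ 1/2) (hr : ‖r‖ ≤ 1/2)
    (hA : ‖A‖*‖p‖ ≤ 1/2) (hB : ‖B‖*‖r‖ ≤ 1/2) (hC : ‖C‖*‖p‖ ≤ 1/2) (hD : ‖D‖*‖r‖ ≤ 1/2)
    (hsmall : 24*(‖p‖+‖r‖)*(∑' j, wfun A Q B T C D j) ≤ 1/2) :
    Multipliable (Ef A Q B T C D p r) ∧
      ‖(∏' jk : ℕ × ℕ, Ef A Q B T C D p r jk) - 1‖
        ≤ 72*(‖p‖+‖r‖)*(∑' j, wfun A Q B T C D j) := by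
  set g : ℕ × ℕ → ℝ :=
    fun jk => (12*(‖p‖+‖r‖)) * (wfun A Q B T C D jk.1 * (1/2)^jk.2) with hg
  have hgs : Summable g := (gb_summable hQ1 hT1).mul_left _
  have hgt : ∑' jk, g jk = 24*(‖p‖+‖r‖)*(∑' j, wfun A Q B T C D j) := by
    rw [hg, tsum_mul_left, gb_tsum hQ1 hT1]
    ring
  have hb : ∀ jk : ℕ × ℕ, ‖Ef A Q B T C D p r jk - 1‖ ≤ g jk := by
    intro jk
    refine le_trans (Ef_sub_one_bound (le_of_lt hQ1) (le_of_lt hT1) hp hr hA hB hC hD jk) ?_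
    apply le_of_eq
    rw [hg]
    ring
  have hsum : ∑' jk, g jk ≤ 1/2 := by rw [hgt]; exact hsmall
  have hbound := tprod_sub_one_bound (f := fun jk => Ef A Q B T C D p r jk - 1) hb hgs hsum
  have hfs : Summable (fun jk => ‖Ef A Q B T C D p r jk - 1‖) :=
    hgs.of_norm_bounded (fun jk => by
      rw [Real.norm_eq_abs, _root_.abs_of_nonneg (norm_nonneg _)]; exact hb jk)
  have hmult : Multipliable (Ef A Q B T C D p r) :=
    (mult_one_add hfs).congr fun jk => by ring
  have heq : (∏' jk : ℕ × ℕ, (1 + (Ef A Q B T C D p r jk - 1)))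
      = ∏' jk : ℕ × ℕ, Ef A Q B T C D p r jk := tprod_congr fun jk => by ring
  refine ⟨hmult, ?_⟩
  rw [← heq]
  refine le_trans hbound ?_
  rw [hgt]
  ring_nf
  exact le_refl _

/-- Factorization of the Gprod factor. -/
theorem R_factor {A Q B T C D p r : ℂ} (j k : ℕ) (h3 : 1 - C*Q^j ≠ 0)
    (h4 : 1 - D*T^j*r^(k+1) ≠ 0) :
    ((1 - A*Q^(j+1)*p^(k+1)) * (1 - B*T^(j+1)*r^k))
      / ((1 - C*Q^j*p^k) * (1 - D*T^j*r^(k+1)))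
    = (if k = 0 then (1 - B*T^(j+1))/(1 - C*Q^j) else 1) * Ef A Q B T C D p r (j,k) := by
  rcases Nat.eq_zero_or_pos k with rfl | hk
  · rw [if_pos rfl]
    have hEf : Ef A Q B T C D p r (j,0)
        = (1 - A*Q^(j+1)*p^(0+1)) * (1-0) / ((1-0)*(1 - D*T^j*r^(0+1))) := rfl
    rw [hEf, pow_zero, pow_zero, mul_one, mul_one, sub_zero]
    field_simp
  · have hk0 : k ≠ 0 := Nat.pos_iff_ne_zero.mp hk
    rw [if_neg hk0, one_mul]
    have hEf : Ef A Q B T C D p r (j,k)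
        = (1 - A*Q^(j+1)*p^(k+1)) * (1-(B*T^(j+1)*r^k))
          / ((1-(C*Q^j*p^k)) * (1 - D*T^j*r^(k+1))) := by
      unfold Ef
      rw [if_neg hk0, if_neg hk0]
    rw [hEf]

/-- Multipliability and value of the limit-factor product over `ℕ`. -/
theorem Lf_prod {B T C Q : ℂ} (hQ1 : ‖Q‖ < 1) (hT1 : ‖T‖ < 1)
    (h3 : ∀ j : ℕ, 1 - C*Q^j ≠ 0) :
    HasProd (fun j : ℕ => (1 - B*T^(j+1))/(1 - C*Q^j))
      ((∏' n : ℕ, (1 - B*T^(n+1))) / (∏' n : ℕ, (1 - C*Q^n))) := by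
  have hs2 : Summable (fun n : ℕ => ‖B*T^(n+1)‖) :=
    (((summable_geometric_of_lt_one (norm_nonneg T) hT1).mul_left (‖B‖*‖T‖)).congr
      fun n => by rw [norm_mul, norm_pow]; ring)
  have hs3 : Summable (fun n : ℕ => ‖C*Q^n‖) :=
    (((summable_geometric_of_lt_one (norm_nonneg Q) hQ1).mul_left ‖C‖).congr
      fun n => by rw [norm_mul, norm_pow])
  have hm2 : Multipliable (fun n : ℕ => 1 - B*T^(n+1)) := mult_one_sub hs2
  have hm3 : Multipliable (fun n : ℕ => 1 - C*Q^n) := mult_one_sub hs3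
  have hP3 : (∏' n : ℕ, (1 - C*Q^n)) ≠ 0 := tprod_one_sub_ne_zero hs3 h3
  exact hasProd_div hm2.hasProd hm3.hasProd hP3

/-- Multipliability and value of the limit-factor product over `ℕ × ℕ`. -/
theorem LL_prod {B T C Q : ℂ} (hQ1 : ‖Q‖ < 1) (hT1 : ‖T‖ < 1)
    (h3 : ∀ j : ℕ, 1 - C*Q^j ≠ 0) :
    Multipliable (fun jk : ℕ × ℕ =>
        if jk.2 = 0 then (1 - B*T^(jk.1+1))/(1 - C*Q^jk.1) else 1) ∧
      (∏' jk : ℕ × ℕ, if jk.2 = 0 then (1 - B*T^(jk.1+1))/(1 - C*Q^jk.1) else 1)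
        = (∏' n : ℕ, (1 - B*T^(n+1))) / (∏' n : ℕ, (1 - C*Q^n)) := by
  set LL : ℕ × ℕ → ℂ :=
    fun jk => if jk.2 = 0 then (1 - B*T^(jk.1+1))/(1 - C*Q^jk.1) else 1 with hLL
  have hinj : Function.Injective (fun j : ℕ => ((j, 0) : ℕ × ℕ)) :=
    fun a b h => congrArg Prod.fst h
  have hout : ∀ x ∉ Set.range (fun j : ℕ => ((j, 0) : ℕ × ℕ)), LL x = 1 := by
    intro x hx
    have hx2 : x.2 ≠ 0 := by
      intro h
      exact hx ⟨x.1, Prod.ext rfl h.symm⟩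
    simp only [hLL, if_neg hx2]
  have hcomp : (LL ∘ fun j : ℕ => ((j, 0) : ℕ × ℕ))
      = fun j : ℕ => (1 - B*T^(j+1))/(1 - C*Q^j) := by
    funext j
    simp [hLL]
  have hLf := Lf_prod (B := B) hQ1 hT1 h3
  have hmc : Multipliable (LL ∘ fun j : ℕ => ((j, 0) : ℕ × ℕ)) := by
    rw [hcomp]
    exact hLf.multipliable
  refine ⟨(hinj.multipliable_iff hout).1 hmc, ?_⟩
  have hsupp : Function.mulSupport LL ⊆ Set.range (fun j : ℕ => ((j, 0) : ℕ × ℕ)) := by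
    intro x hx
    by_contra hnot
    exact hx (hout x hnot)
  rw [← hinj.tprod_eq hsupp]
  have : ∏' j : ℕ, LL (j, 0) = ∏' j : ℕ, (1 - B*T^(j+1))/(1 - C*Q^j) :=
    tprod_congr fun j => congrFun hcomp j
  rw [this, hLf.tprod_eq]


theorem norm_exp_two_pi_I (z : ℂ) :
    ‖Complex.exp (2*(Real.pi:ℂ)*Complex.I*z)‖ = Real.exp (-(2*Real.pi*z.im)) := by
  rw [Complex.norm_exp]
  congr 1
  simp [Complex.mul_re, Complex.mul_im]

theorem norm_exp_pos_div (a b : ℂ) :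
    ‖Complex.exp (2*(Real.pi:ℂ)*Complex.I*a/b)‖ = Real.exp (-(2*Real.pi*(a/b).im)) := by
  rw [mul_div_assoc, norm_exp_two_pi_I]

theorem norm_exp_neg_div (a b : ℂ) :
    ‖Complex.exp (-(2*(Real.pi:ℂ)*Complex.I*a)/b)‖ = Real.exp (2*Real.pi*(a/b).im) := by
  rw [neg_div, mul_div_assoc, ← mul_neg, norm_exp_two_pi_I]
  simp

theorem small_helper {x e K : ℝ} (hx : 0 ≤ x) (hxK : x ≤ K) (he0 : 0 ≤ e)
    (heK : e ≤ 1/(2*(K+1))) : x*e ≤ 1/2 := by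
  have hK0 : 0 ≤ K := le_trans hx hxK
  have h1 : x*e ≤ K * (1/(2*(K+1))) := mul_le_mul hxK heK he0 hK0
  have h2 : K * (1/(2*(K+1))) ≤ 1/2 := by
    rw [mul_one_div, div_le_div_iff₀ (by positivity) (by norm_num)]
    linarith
  linarith

theorem small_helper2 {s W : ℝ} (hW : 0 ≤ W) (hs0 : 0 ≤ s)
    (hs : s ≤ 2*(1/(8*(24*W+1)))) : 24*s*W ≤ 1/2 := by
  have ht : (8*(24*W+1)) * (1/(8*(24*W+1))) = 1 := mul_one_div_cancel (by positivity)
  have ht0 : (0:ℝ) ≤ 1/(8*(24*W+1)) := by positivity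
  nlinarith [mul_le_mul_of_nonneg_right hs hW]

end Stmt9Aux


/-- The infinite `q`-Pochhammer symbol `(a;q)_∞ = ∏_{n≥0} (1 - a qⁿ)`. -/
noncomputable def qPoch (a p : ℂ) : ℂ := ∏' n : ℕ, (1 - a * p ^ n)

/-- The modified elliptic gamma function `G(u;ω)` as a double infinite product, with
`q = e^{2πi ω1/ω2}`, `p = e^{2πi ω3/ω2}`, `r = e^{2πi ω3/ω1}`, `q̃ = e^{-2πi ω2/ω1}`. -/
noncomputable def Gprod (ω1 ω2 ω3 u : ℂ) : ℂ :=
  ∏' jk : ℕ × ℕ,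
    ((1 - exp (-(2*(Real.pi:ℂ)*I*u)/ω2) * exp (2*(Real.pi:ℂ)*I*ω1/ω2) ^ (jk.1 + 1) *
          exp (2*(Real.pi:ℂ)*I*ω3/ω2) ^ (jk.2 + 1)) *
     (1 - exp (2*(Real.pi:ℂ)*I*u/ω1) * exp (-(2*(Real.pi:ℂ)*I*ω2)/ω1) ^ (jk.1 + 1) *
          exp (2*(Real.pi:ℂ)*I*ω3/ω1) ^ jk.2)) /
    ((1 - exp (2*(Real.pi:ℂ)*I*u/ω2) * exp (2*(Real.pi:ℂ)*I*ω1/ω2) ^ jk.1 *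
          exp (2*(Real.pi:ℂ)*I*ω3/ω2) ^ jk.2) *
     (1 - exp (-(2*(Real.pi:ℂ)*I*u)/ω1) * exp (-(2*(Real.pi:ℂ)*I*ω2)/ω1) ^ jk.1 *
          exp (2*(Real.pi:ℂ)*I*ω3/ω1) ^ (jk.2 + 1)))

/-- The double sine function
`S(u;ω1,ω2) = (e^{2πi u/ω2}; q)_∞ / (e^{2πi u/ω1} q̃; q̃)_∞`. -/
noncomputable def dsine (ω1 ω2 u : ℂ) : ℂ :=
  qPoch (exp (2*(Real.pi:ℂ)*I*u/ω2)) (exp (2*(Real.pi:ℂ)*I*ω1/ω2)) /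
  qPoch (exp (2*(Real.pi:ℂ)*I*u/ω1) * exp (-(2*(Real.pi:ℂ)*I*ω2)/ω1))
    (exp (-(2*(Real.pi:ℂ)*I*ω2)/ω1))

set_option maxHeartbeats 2000000 in
/-- As `ω3 → ∞` with `Im(ω3/ω1) → +∞` and `Im(ω3/ω2) → +∞`, the reciprocal of the modified
elliptic gamma function tends to the double sine function. -/
theorem stmt9 (ω1 ω2 : ℂ) (hω1 : ω1 ≠ 0) (hω2 : ω2 ≠ 0) (h12 : 0 < (ω1/ω2).im) (u : ℂ)
    -- `e^{2πi u/ω2} ∉ {q^{-j} : j ≥ 0}` :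
    (hu1 : ∀ j : ℕ, exp (2*(Real.pi:ℂ)*I*u/ω2) * exp (2*(Real.pi:ℂ)*I*ω1/ω2) ^ j ≠ 1)
    -- `e^{-2πi u/ω1} ∉ {q̃^{-j} r^{-k-1}}`, eventually along the limiting process :
    (hu2 : ∀ᶠ ω3 in
        comap (fun ω3 : ℂ => (ω3/ω1).im) atTop ⊓ comap (fun ω3 : ℂ => (ω3/ω2).im) atTop,
      ∀ j k : ℕ,
        exp (-(2*(Real.pi:ℂ)*I*u)/ω1) * exp (-(2*(Real.pi:ℂ)*I*ω2)/ω1) ^ j *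
          exp (2*(Real.pi:ℂ)*I*ω3/ω1) ^ (k + 1) ≠ 1) :
    Tendsto (fun ω3 : ℂ => (Gprod ω1 ω2 ω3 u)⁻¹)
      (comap (fun ω3 : ℂ => (ω3/ω1).im) atTop ⊓ comap (fun ω3 : ℂ => (ω3/ω2).im) atTop)
      (nhds (dsine ω1 ω2 u)) := by
  classical
  set l := comap (fun ω3 : ℂ => (ω3/ω1).im) atTop ⊓ comap (fun ω3 : ℂ => (ω3/ω2).im) atTop
    with hl
  set A := exp (-(2*(Real.pi:ℂ)*I*u)/ω2) with hAdef
  set Q := exp (2*(Real.pi:ℂ)*I*ω1/ω2) with hQdef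
  set B := exp (2*(Real.pi:ℂ)*I*u/ω1) with hBdef
  set T := exp (-(2*(Real.pi:ℂ)*I*ω2)/ω1) with hTdef
  set C := exp (2*(Real.pi:ℂ)*I*u/ω2) with hCdef
  set D := exp (-(2*(Real.pi:ℂ)*I*u)/ω1) with hDdef
  -- basic norms
  have hQ1 : ‖Q‖ < 1 := by
    rw [hQdef, Stmt9Aux.norm_exp_pos_div, Real.exp_lt_one_iff]
    nlinarith [Real.pi_pos, h12]
  have him : (ω2/ω1).im < 0 := by
    rw [← inv_div ω1 ω2, Complex.inv_im]
    apply div_neg_of_neg_of_pos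
    · simpa using h12
    · exact Complex.normSq_pos.2 (div_ne_zero hω1 hω2)
  have hT1 : ‖T‖ < 1 := by
    rw [hTdef, Stmt9Aux.norm_exp_neg_div, Real.exp_lt_one_iff]
    nlinarith [Real.pi_pos, him]
  -- key products
  set P2 := ∏' n : ℕ, (1 - B*T^(n+1)) with hP2def
  set P3 := ∏' n : ℕ, (1 - C*Q^n) with hP3def
  have h3 : ∀ j : ℕ, 1 - C*Q^j ≠ 0 := fun j => sub_ne_zero.2 (Ne.symm (hu1 j))
  have hs3 : Summable (fun n : ℕ => ‖C*Q^n‖) :=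
    (((summable_geometric_of_lt_one (norm_nonneg Q) hQ1).mul_left ‖C‖).congr
      fun n => by rw [norm_mul, norm_pow])
  have hP3ne : P3 ≠ 0 := Stmt9Aux.tprod_one_sub_ne_zero hs3 h3
  -- dsine in terms of P2 P3
  have hds : dsine ω1 ω2 u = P3 / P2 := by
    unfold dsine qPoch
    rw [← hCdef, ← hQdef, ← hBdef, ← hTdef, ← hP3def]
    congr 1
    rw [hP2def]
    exact tprod_congr fun n => by ring
  -- constants
  set W := ∑' j, Stmt9Aux.wfun A Q B T C D j with hWdef
  have hW0 : 0 ≤ W := tsum_nonneg (Stmt9Aux.wfun_nonneg A Q B T C D)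
  set K := ‖A‖ + ‖B‖ + ‖C‖ + ‖D‖ with hKdef
  have hK0 : 0 ≤ K := by positivity
  set ε := min (1/2 : ℝ) (min (1/(2*(K+1))) (1/(8*(24*W+1)))) with hεdef
  have hε0 : 0 < ε := by
    apply lt_min (by norm_num)
    exact lt_min (by positivity) (by positivity)
  have hεhalf : ε ≤ 1/2 := min_le_left _ _
  have hεK : ε ≤ 1/(2*(K+1)) := le_trans (min_le_right _ _) (min_le_left _ _)
  have hεW : ε ≤ 1/(8*(24*W+1)) := le_trans (min_le_right _ _) (min_le_right _ _)
  -- tendsto of the norms of p and r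
  have hexp0 : Tendsto (fun t : ℝ => Real.exp (-(2*Real.pi*t))) atTop (𝓝 0) := by
    apply Real.tendsto_exp_atBot.comp
    apply tendsto_neg_atTop_atBot.comp
    exact Tendsto.const_mul_atTop (by positivity) tendsto_id
  have him1 : Tendsto (fun ω3 : ℂ => (ω3/ω1).im) l atTop :=
    tendsto_comap.mono_left inf_le_left
  have him2 : Tendsto (fun ω3 : ℂ => (ω3/ω2).im) l atTop :=
    tendsto_comap.mono_left inf_le_right
  have htp : Tendsto (fun ω3 : ℂ => ‖exp (2*(Real.pi:ℂ)*I*ω3/ω2)‖) l (𝓝 0) :=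
    (hexp0.comp him2).congr fun ω3 => (Stmt9Aux.norm_exp_pos_div ω3 ω2).symm
  have htr : Tendsto (fun ω3 : ℂ => ‖exp (2*(Real.pi:ℂ)*I*ω3/ω1)‖) l (𝓝 0) :=
    (hexp0.comp him1).congr fun ω3 => (Stmt9Aux.norm_exp_pos_div ω3 ω1).symm
  have hev1 : ∀ᶠ ω3 in l, ‖exp (2*(Real.pi:ℂ)*I*ω3/ω2)‖ ≤ ε :=
    htp.eventually (eventually_le_nhds hε0)
  have hev2 : ∀ᶠ ω3 in l, ‖exp (2*(Real.pi:ℂ)*I*ω3/ω1)‖ ≤ ε :=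
    htr.eventually (eventually_le_nhds hε0)
  -- the correction product as a function of ω3
  set EPf : ℂ → ℂ := fun ω3 => ∏' jk : ℕ × ℕ,
    Stmt9Aux.Ef A Q B T C D (exp (2*(Real.pi:ℂ)*I*ω3/ω2)) (exp (2*(Real.pi:ℂ)*I*ω3/ω1)) jk
    with hEPfdef
  -- the main eventual decomposition
  have hmain : ∀ᶠ ω3 in l, Gprod ω1 ω2 ω3 u = (P2/P3) * EPf ω3 ∧
      ‖EPf ω3 - 1‖ ≤ 72*(‖exp (2*(Real.pi:ℂ)*I*ω3/ω2)‖+‖exp (2*(Real.pi:ℂ)*I*ω3/ω1)‖)*W := by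
    filter_upwards [hu2, hev1, hev2] with ω3 H1 Hp Hr
    set p := exp (2*(Real.pi:ℂ)*I*ω3/ω2) with hpdef
    set r := exp (2*(Real.pi:ℂ)*I*ω3/ω1) with hrdef
    have hnp := norm_nonneg p
    have hnr := norm_nonneg r
    have hp2 : ‖p‖ ≤ 1/2 := le_trans Hp hεhalf
    have hr2 : ‖r‖ ≤ 1/2 := le_trans Hr hεhalf
    have hAK : ‖A‖ ≤ K := by rw [hKdef]; linarith [norm_nonneg A, norm_nonneg B, norm_nonneg C, norm_nonneg D]
    have hA2 : ‖A‖*‖p‖ ≤ 1/2 :=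
      Stmt9Aux.small_helper (norm_nonneg A) hAK hnp (le_trans Hp hεK)
    have hBK : ‖B‖ ≤ K := by rw [hKdef]; linarith [norm_nonneg A, norm_nonneg B, norm_nonneg C, norm_nonneg D]
    have hB2 : ‖B‖*‖r‖ ≤ 1/2 :=
      Stmt9Aux.small_helper (norm_nonneg B) hBK hnr (le_trans Hr hεK)
    have hCK : ‖C‖ ≤ K := by rw [hKdef]; linarith [norm_nonneg A, norm_nonneg B, norm_nonneg C, norm_nonneg D]
    have hC2 : ‖C‖*‖p‖ ≤ 1/2 :=
      Stmt9Aux.small_helper (norm_nonneg C) hCK hnp (le_trans Hp hεK)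
    have hDK : ‖D‖ ≤ K := by rw [hKdef]; linarith [norm_nonneg A, norm_nonneg B, norm_nonneg C, norm_nonneg D]
    have hD2 : ‖D‖*‖r‖ ≤ 1/2 :=
      Stmt9Aux.small_helper (norm_nonneg D) hDK hnr (le_trans Hr hεK)
    have hsmall : 24*(‖p‖+‖r‖)*W ≤ 1/2 := by
      apply Stmt9Aux.small_helper2 hW0 (by positivity)
      have := add_le_add (le_trans Hp hεW) (le_trans Hr hεW)
      linarith
    have hEP := Stmt9Aux.EP_est (A := A) (B := B) (C := C) (D := D) hQ1 hT1 hp2 hr2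
      hA2 hB2 hC2 hD2 (by rw [← hWdef]; exact hsmall)
    have h4 : ∀ j k : ℕ, 1 - D*T^j*r^(k+1) ≠ 0 :=
      fun j k => sub_ne_zero.2 (Ne.symm (H1 j k))
    have hLL := Stmt9Aux.LL_prod (B := B) (T := T) (C := C) (Q := Q) hQ1 hT1 h3
    have hgp : Gprod ω1 ω2 ω3 u = ∏' jk : ℕ × ℕ,
        ((if jk.2 = 0 then (1 - B*T^(jk.1+1))/(1 - C*Q^jk.1) else 1) *
          Stmt9Aux.Ef A Q B T C D p r jk) := by
      unfold Gprod
      rw [← hAdef, ← hQdef, ← hBdef, ← hTdef, ← hCdef, ← hDdef, ← hpdef, ← hrdef]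
      exact tprod_congr fun jk => Stmt9Aux.R_factor jk.1 jk.2 (h3 jk.1) (h4 jk.1 jk.2)
    constructor
    · rw [hgp, Multipliable.tprod_mul hLL.1 hEP.1, hLL.2, hEPfdef]
    · refine le_trans ?_ (hEP.2)
      apply le_of_eq
      rw [hEPfdef]
  -- squeeze
  have hnt : Tendsto (fun ω3 : ℂ =>
      72*(‖exp (2*(Real.pi:ℂ)*I*ω3/ω2)‖+‖exp (2*(Real.pi:ℂ)*I*ω3/ω1)‖)*W) l (𝓝 0) := by
    have h := ((htp.add htr).const_mul (72*W))
    rw [show (72*W*((0:ℝ)+0):ℝ) = 0 by ring] at h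
    exact h.congr fun ω3 => by ring
  have hEPtend : Tendsto EPf l (𝓝 1) := by
    have h0 : Tendsto (fun ω3 => EPf ω3 - 1) l (𝓝 0) :=
      squeeze_zero_norm' (hmain.mono fun ω3 h => h.2) hnt
    have := h0.add (tendsto_const_nhds (x := (1:ℂ)))
    simpa using this
  have hG : Tendsto (fun ω3 : ℂ => Gprod ω1 ω2 ω3 u) l (𝓝 (P2/P3)) := by
    have h := tendsto_const_nhds (x := P2/P3) (f := l) |>.mul hEPtend
    rw [mul_one] at h
    exact Tendsto.congr' (hmain.mono fun ω3 hh => hh.1.symm) h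
  rw [hds]
  by_cases hP2 : P2 = 0
  · rw [hP2, div_zero]
    apply Tendsto.congr' _ (tendsto_const_nhds (x := (0:ℂ)))
    filter_upwards [hmain] with ω3 h
    rw [h.1, hP2, zero_div, zero_mul, inv_zero]
  · have hV : P2/P3 ≠ 0 := div_ne_zero hP2 hP3ne
    have h := hG.inv₀ hV
    rw [inv_div] at h
    exact h
end

section
/- Let N ≥ 1, let t, t_0, t_1, t_2 ∈ ℂ, and let z_1,…,z_N ∈ ℂ∖{0} satisfy z_j^2 ≠ 1 for all j and z_j^{ν} z_k^{μ} ≠ 1 for all j < k and all signs ν, μ ∈ {±1} (so that no denominator below vanishes). Then Σ_{ν ∈ {±1}^N} ∏_{1 ≤ j < k ≤ N} (1 − t z_j^{ν_j} z_k^{ν_k})/(1 − z_j^{ν_j} z_k^{ν_k}) · ∏_{j=1}^N (1 − t^{N−1} t_0 t_1 t_2 z_j^{−ν_j}) (1 − t_0 z_j^{ν_j})(1 − t_1 z_j^{ν_j})(1 − t_2 z_j^{ν_j}) / (1 − z_j^{2ν_j}) = ∏_{j=1}^N (1 − t^{j−1} t_0 t_1)(1 − t^{j−1} t_0 t_2)(1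 − t^{j−1} t_1 t_2). -/
open Finset Polynomial

/-- The sign exponent attached to a Boolean: `+1` or `-1`. -/
def sgn (b : Bool) : ℤ := if b then 1 else -1


namespace AuxBC

noncomputable def pairP (t : ℂ) {n : ℕ} (y : Fin n → ℂ) : ℂ :=
  ∏ j, ∏ k, if j < k then (1 - t * y j * y k) / (1 - y j * y k) else 1

noncomputable def gfac (a b c d u : ℂ) : ℂ :=
  (1 - a * u⁻¹) * (1 - b * u) * (1 - c * u) * (1 - d * u) / (1 - u ^ 2)

noncomputable def yv {n : ℕ} (z : Fin n → ℂ) (ν : Fin n → Bool) : Fin n → ℂ :=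
  fun j => if ν j then z j else (z j)⁻¹

noncomputable def Ssum (n : ℕ) (t t0 t1 t2 : ℂ) (z : Fin n → ℂ) : ℂ :=
  ∑ ν : Fin n → Bool,
    pairP t (yv z ν) * ∏ j, gfac (t ^ (n - 1) * t0 * t1 * t2) t0 t1 t2 (yv z ν j)

noncomputable def Rprod (n : ℕ) (t t0 t1 t2 : ℂ) : ℂ :=
  ∏ j ∈ Finset.range n, (1 - t ^ j * t0 * t1) * (1 - t ^ j * t0 * t2) * (1 - t ^ j * t1 * t2)

def Gen {n : ℕ} (z : Fin n → ℂ) : Prop :=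
  (∀ j, z j ≠ 0) ∧ (∀ j, z j ^ 2 ≠ 1) ∧ (∀ j k, j ≠ k → z j * z k ≠ 1 ∧ z j ≠ z k)

lemma Gen.ne_zero {n} {z : Fin n → ℂ} (h : Gen z) (j : Fin n) (b : Bool) :
    (if b then z j else (z j)⁻¹) ≠ 0 := by
  cases b <;> simp [h.1 j]

lemma Gen.sq_ne_one {n} {z : Fin n → ℂ} (h : Gen z) (j : Fin n) (b : Bool) :
    (if b then z j else (z j)⁻¹) ^ 2 ≠ 1 := by
  cases b <;> simp only [Bool.false_eq_true, ite_false, ite_true]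
  · rw [inv_pow]
    intro hc
    apply h.2.1 j
    have := congrArg (·⁻¹) hc
    simpa using this
  · exact h.2.1 j

lemma Gen.mul_ne_one {n} {z : Fin n → ℂ} (h : Gen z) {j k : Fin n} (hjk : j ≠ k) (b c : Bool) :
    (if b then z j else (z j)⁻¹) * (if c then z k else (z k)⁻¹) ≠ 1 := by
  have h0j := h.1 j; have h0k := h.1 k
  have h1 := (h.2.2 j k hjk).1
  have h2 := (h.2.2 j k hjk).2
  cases b <;> cases c <;> simp only [Bool.false_eq_true, ite_false, ite_true]
  · rw [← mul_inv]
    intro hc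
    exact h1 (by rw [← inv_inv (z j * z k), hc, inv_one])
  · intro hc
    apply h2
    field_simp at hc
    exact hc.symm
  · intro hc
    apply h2
    field_simp at hc
    exact hc
  · exact h1

lemma pair_split {n : ℕ} (F : ℂ → ℂ → ℂ) (hF : ∀ u v, F u v = F v u)
    (y : Fin (n + 1) → ℂ) (m : Fin (n + 1)) :
    (∏ j, ∏ k, if j < k then F (y j) (y k) else 1)
      = ((∏ j : Fin n, ∏ k : Fin n,
            if j < k then F (y (m.succAbove j)) (y (m.succAbove k)) else 1) *
         ∏ j : Fin n, F (y m) (y (m.succAbove j))) := by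
  rw [Fin.prod_univ_succAbove (fun j => ∏ k, if j < k then F (y j) (y k) else 1) m]
  rw [Fin.prod_univ_succAbove (fun k => if m < k then F (y m) (y k) else 1) m]
  have h1 : ∀ j' : Fin n,
      (∏ k, if m.succAbove j' < k then F (y (m.succAbove j')) (y k) else 1)
        = (if m.succAbove j' < m then F (y (m.succAbove j')) (y m) else 1) *
          ∏ k' : Fin n, if j' < k' then F (y (m.succAbove j')) (y (m.succAbove k')) else 1 := by
    intro j'
    rw [Fin.prod_univ_succAbove
      (fun k => if m.succAbove j' < k then F (y (m.succAbove j')) (y k) else 1) m]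
    congr 1
    refine Finset.prod_congr rfl fun k' _ => ?_
    simp only [Fin.succAbove_lt_succAbove_iff]
  simp only [h1, lt_irrefl, if_false, one_mul]
  rw [Finset.prod_mul_distrib]
  rw [show ∀ a b c : ℂ, a * (b * c) = c * (b * a) from fun a b c => by ring]
  congr 1
  rw [← Finset.prod_mul_distrib]
  refine Finset.prod_congr rfl fun j' _ => ?_
  rcases lt_trichotomy (m.succAbove j') m with h | h | h
  · rw [if_pos h, if_neg (asymm h), hF]
    ring
  · exact absurd h (Fin.succAbove_ne m j')
  · rw [if_neg (asymm h), if_pos h]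
    ring

lemma gfac_merge (t a t1 t2 s u : ℂ) (hsu : 1 - s * u ≠ 0) (hu : u ≠ 0) :
    (1 - t * s * u) / (1 - s * u) * gfac a s t1 t2 u = gfac a (t * s) t1 t2 u := by
  rw [gfac, gfac]
  rcases eq_or_ne (1 - u ^ 2) 0 with h | h
  · rw [h, div_zero, div_zero, mul_zero]
  · field_simp

lemma gfac_special (n : ℕ) (t s t1 t2 : ℂ) (hs : s ≠ 0) (hs2 : 1 - s ^ 2 ≠ 0) :
    gfac (t ^ n * s * t1 * t2) s t1 t2 s = (1 - t ^ n * t1 * t2) * (1 - t1 * s) * (1 - t2 * s) := by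
  rw [gfac]
  field_simp

lemma survive {n : ℕ} (t a t1 t2 s : ℂ) (y : Fin (n + 1) → ℂ) (m : Fin (n + 1))
    (hym : y m = s) (hs0 : s ≠ 0) (hs2 : 1 - s ^ 2 ≠ 0) (ha : a = t ^ n * s * t1 * t2)
    (hy0 : ∀ j : Fin n, y (m.succAbove j) ≠ 0)
    (hsu : ∀ j : Fin n, 1 - s * y (m.succAbove j) ≠ 0) :
    pairP t y * ∏ j, gfac a s t1 t2 (y j)
      = (1 - t ^ n * t1 * t2) * (1 - t1 * s) * (1 - t2 * s) *
          (pairP t (y ∘ m.succAbove) * ∏ j : Fin n, gfac a (t * s) t1 t2 (y (m.succAbove j))) := by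
  have hps := pair_split (fun u v => (1 - t * u * v) / (1 - u * v)) (fun u v => by ring) y m
  rw [pairP, hps]
  rw [Fin.prod_univ_succAbove (fun j => gfac a s t1 t2 (y j)) m, hym, ha,
    gfac_special n t s t1 t2 hs0 hs2]
  have hpp : pairP t (y ∘ m.succAbove)
      = ∏ j : Fin n, ∏ k : Fin n,
          if j < k then
            (1 - t * y (m.succAbove j) * y (m.succAbove k)) /
              (1 - y (m.succAbove j) * y (m.succAbove k))
          else 1 := rfl
  rw [hpp]
  have hmerge : (∏ j : Fin n, (1 - t * s * y (m.succAbove j)) / (1 - s * y (m.succAbove j))) *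
      (∏ j : Fin n, gfac (t ^ n * s * t1 * t2) s t1 t2 (y (m.succAbove j)))
      = ∏ j : Fin n, gfac (t ^ n * s * t1 * t2) (t * s) t1 t2 (y (m.succAbove j)) := by
    rw [← Finset.prod_mul_distrib]
    exact Finset.prod_congr rfl fun j _ =>
      gfac_merge t (t ^ n * s * t1 * t2) t1 t2 s (y (m.succAbove j)) (hsu j) (hy0 j)
  rw [← hmerge]
  ring

lemma Rprod_succ (n : ℕ) (t t0 t1 t2 : ℂ) :
    Rprod (n + 1) t t0 t1 t2 = Rprod n t t0 t1 t2 *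
      ((1 - t ^ n * t0 * t1) * (1 - t ^ n * t0 * t2) * (1 - t ^ n * t1 * t2)) := by
  rw [Rprod, Rprod, Finset.prod_range_succ]

lemma Rprod_step (n : ℕ) (t s t1 t2 : ℂ) :
    (1 - t ^ n * t1 * t2) * (1 - t1 * s) * (1 - t2 * s) * Rprod n t (t * s) t1 t2
      = Rprod (n + 1) t s t1 t2 := by
  induction n with
  | zero =>
    rw [Rprod_succ]
    simp [Rprod]
    ring
  | succ n ih =>
    rw [Rprod_succ n t (t * s) t1 t2, Rprod_succ (n + 1) t s t1 t2, ← ih]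
    ring

lemma reduction {n : ℕ}
    (IH : ∀ (t t0 t1 t2 : ℂ) (z : Fin n → ℂ), Gen z → Ssum n t t0 t1 t2 z = Rprod n t t0 t1 t2)
    (t t1 t2 s : ℂ) (z : Fin (n + 1) → ℂ) (hz : Gen z) (m : Fin (n + 1)) (b0 : Bool)
    (hs : s = if b0 then z m else (z m)⁻¹) :
    Ssum (n + 1) t s t1 t2 z = Rprod (n + 1) t s t1 t2 := by
  have hs0 : s ≠ 0 := hs ▸ hz.ne_zero m b0
  have hsq : s ^ 2 ≠ 1 := hs ▸ hz.sq_ne_one m b0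
  have hs2 : 1 - s ^ 2 ≠ 0 := sub_ne_zero.mpr (Ne.symm hsq)
  have hzs : Gen (z ∘ m.succAbove) := by
    refine ⟨fun j => hz.1 _, fun j => hz.2.1 _, fun j k hjk => hz.2.2 _ _ ?_⟩
    exact fun hcon => hjk (Fin.succAbove_right_injective hcon)
  have hexp : n + 1 - 1 = n := rfl
  rw [Ssum, hexp]
  rw [← Equiv.sum_comp (Fin.insertNthEquiv (fun _ : Fin (n + 1) => Bool) m)
      (fun ν => pairP t (yv z ν) * ∏ j, gfac (t ^ n * s * t1 * t2) s t1 t2 (yv z ν j))]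
  rw [Fintype.sum_prod_type]
  have hiapp : ∀ (b : Bool) (ν' : Fin n → Bool),
      (Fin.insertNthEquiv (fun _ : Fin (n + 1) => Bool) m) (b, ν') = m.insertNth b ν' :=
    fun b ν' => rfl
  simp only [hiapp]
  have hkill : ∀ ν' : Fin n → Bool,
      pairP t (yv z (m.insertNth (!b0) ν')) *
        ∏ j, gfac (t ^ n * s * t1 * t2) s t1 t2 (yv z (m.insertNth (!b0) ν') j) = 0 := by
    intro ν'
    have hval : yv z (m.insertNth (!b0) ν') m = if !b0 then z m else (z m)⁻¹ := by
      simp [yv, Fin.insertNth_apply_same]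
    have h1 : s * yv z (m.insertNth (!b0) ν') m = 1 := by
      rw [hval, hs]
      cases b0 <;> simp [hz.1 m]
    apply mul_eq_zero_of_right
    apply Finset.prod_eq_zero (Finset.mem_univ m)
    rw [gfac]
    rw [show (1 : ℂ) - s * yv z (m.insertNth (!b0) ν') m = 0 from by rw [h1]; ring]
    simp
  have hyj : ∀ (ν' : Fin n → Bool) (j : Fin n),
      yv z (m.insertNth b0 ν') (m.succAbove j) = yv (z ∘ m.succAbove) ν' j := by
    intro ν' j
    simp [yv, Fin.insertNth_apply_succAbove]
  have hsurv : ∀ ν' : Fin n → Bool,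
      pairP t (yv z (m.insertNth b0 ν')) *
        ∏ j, gfac (t ^ n * s * t1 * t2) s t1 t2 (yv z (m.insertNth b0 ν') j)
      = (1 - t ^ n * t1 * t2) * (1 - t1 * s) * (1 - t2 * s) *
          (pairP t (yv (z ∘ m.succAbove) ν') *
            ∏ j : Fin n, gfac (t ^ (n - 1) * (t * s) * t1 * t2) (t * s) t1 t2
              (yv (z ∘ m.succAbove) ν' j)) := by
    intro ν'
    have hym : yv z (m.insertNth b0 ν') m = s := by
      simp [yv, Fin.insertNth_apply_same, hs]
    have hy0 : ∀ j : Fin n, yv z (m.insertNth b0 ν') (m.succAbove j) ≠ 0 := by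
      intro j
      rw [hyj ν' j]
      exact hzs.ne_zero j (ν' j)
    have hsu : ∀ j : Fin n, 1 - s * yv z (m.insertNth b0 ν') (m.succAbove j) ≠ 0 := by
      intro j
      rw [hyj ν' j]
      refine sub_ne_zero.mpr (Ne.symm ?_)
      rw [hs]
      exact hz.mul_ne_one (Fin.succAbove_ne m j).symm b0 (ν' j)
    rw [survive t (t ^ n * s * t1 * t2) t1 t2 s (yv z (m.insertNth b0 ν')) m hym hs0 hs2 rfl
      hy0 hsu]
    congr 1
    have h2 : (yv z (m.insertNth b0 ν')) ∘ m.succAbove = yv (z ∘ m.succAbove) ν' :=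
      funext fun j => hyj ν' j
    rw [h2]
    congr 1
    refine Finset.prod_congr rfl fun j _ => ?_
    rw [hyj ν' j]
    congr 1
    have hn : t ^ n = t ^ (n - 1) * t := by
      rw [← pow_succ, Nat.sub_add_cancel j.pos]
    rw [hn]
    ring
  have hbool : ∀ G : Bool → ℂ, (∑ b, G b) = G b0 + G (!b0) := by
    intro G
    cases b0 <;> rw [Fintype.sum_bool] <;> ring_nf <;> simp [add_comm]
  rw [hbool]
  rw [Finset.sum_eq_zero fun ν' _ => hkill ν', add_zero]
  rw [Finset.sum_congr rfl fun ν' _ => hsurv ν']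
  rw [← Finset.mul_sum]
  have hSs : (∑ ν' : Fin n → Bool,
      pairP t (yv (z ∘ m.succAbove) ν') *
        ∏ j : Fin n, gfac (t ^ (n - 1) * (t * s) * t1 * t2) (t * s) t1 t2
          (yv (z ∘ m.succAbove) ν' j)) = Ssum n t (t * s) t1 t2 (z ∘ m.succAbove) := rfl
  rw [hSs, IH t (t * s) t1 t2 (z ∘ m.succAbove) hzs, Rprod_step]

lemma Ssum_symm01 (n : ℕ) (t t0 t1 t2 : ℂ) (z : Fin n → ℂ) :
    Ssum n t t0 t1 t2 z = Ssum n t t1 t0 t2 z := by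
  rw [Ssum, Ssum]
  refine Finset.sum_congr rfl fun ν _ => ?_
  congr 1
  refine Finset.prod_congr rfl fun j _ => ?_
  rw [gfac, gfac]
  ring

lemma Rprod_symm01 (n : ℕ) (t t0 t1 t2 : ℂ) :
    Rprod n t t0 t1 t2 = Rprod n t t1 t0 t2 := by
  rw [Rprod, Rprod]
  exact Finset.prod_congr rfl fun j _ => by ring

lemma interp {ι : Type*} [Fintype ι] {f : ι → ℂ} (hf : Function.Injective f)
    (p q : ℂ[X]) {d : ℕ} (hp : p.natDegree ≤ d) (hq : q.natDegree ≤ d)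
    (hd : d < Fintype.card ι) (h : ∀ i, p.eval (f i) = q.eval (f i)) (s : ℂ) :
    p.eval s = q.eval s := by
  have h0 : p - q = 0 := by
    apply Polynomial.eq_zero_of_natDegree_lt_card_of_eval_eq_zero (p - q) hf
    · intro i
      simp [h i]
    · exact lt_of_le_of_lt ((Polynomial.natDegree_sub_le p q).trans (max_le hp hq)) hd
  rw [sub_eq_zero.mp h0]

lemma nd_one_sub_CX (a : ℂ) : ((1 : ℂ[X]) - C a * X).natDegree ≤ 1 := by
  refine (Polynomial.natDegree_sub_le _ _).trans (max_le ?_ ?_)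
  · simp
  · exact (Polynomial.natDegree_C_mul_le a X).trans (by simp)

lemma nd_lin2 (a b c : ℂ) :
    ((1 - C a * X) * (1 - C b * X) * C c : ℂ[X]).natDegree ≤ 2 := by
  refine Polynomial.natDegree_mul_le.trans ?_
  have h1 := Polynomial.natDegree_mul_le (p := (1 - C a * X : ℂ[X])) (q := (1 - C b * X : ℂ[X]))
  have h2 := nd_one_sub_CX a
  have h3 := nd_one_sub_CX b
  simp only [Polynomial.natDegree_C]
  omega

lemma nd_lin1 (a c : ℂ) : ((1 - C a * X) * C c : ℂ[X]).natDegree ≤ 1 := by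
  refine Polynomial.natDegree_mul_le.trans ?_
  have h2 := nd_one_sub_CX a
  simp only [Polynomial.natDegree_C]
  omega

noncomputable def polyL (n : ℕ) (t t1 t2 : ℂ) (z : Fin n → ℂ) : ℂ[X] :=
  ∑ ν : Fin n → Bool, C (pairP t (yv z ν)) *
    ∏ j, ((1 - C (t ^ (n - 1) * t1 * t2 * (yv z ν j)⁻¹) * X) * (1 - C (yv z ν j) * X) *
      C ((1 - t1 * yv z ν j) * (1 - t2 * yv z ν j) / (1 - (yv z ν j) ^ 2)))

lemma polyL_eval (n : ℕ) (t t1 t2 : ℂ) (z : Fin n → ℂ) (s : ℂ) :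
    (polyL n t t1 t2 z).eval s = Ssum n t s t1 t2 z := by
  rw [polyL, Ssum, Polynomial.eval_finset_sum]
  refine Finset.sum_congr rfl fun ν _ => ?_
  rw [Polynomial.eval_mul, Polynomial.eval_C, Polynomial.eval_prod]
  congr 1
  refine Finset.prod_congr rfl fun j _ => ?_
  simp only [Polynomial.eval_mul, Polynomial.eval_sub, Polynomial.eval_one, Polynomial.eval_C,
    Polynomial.eval_X]
  rw [gfac]
  ring

lemma polyL_deg (n : ℕ) (t t1 t2 : ℂ) (z : Fin n → ℂ) :
    (polyL n t t1 t2 z).natDegree ≤ 2 * n := by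
  rw [polyL]
  refine Polynomial.natDegree_sum_le_of_forall_le _ _ fun ν _ => ?_
  refine Polynomial.natDegree_mul_le.trans ?_
  have h1 : (∏ j, ((1 - C (t ^ (n - 1) * t1 * t2 * (yv z ν j)⁻¹) * X) * (1 - C (yv z ν j) * X) *
      C ((1 - t1 * yv z ν j) * (1 - t2 * yv z ν j) / (1 - (yv z ν j) ^ 2)))).natDegree
      ≤ ∑ _j : Fin n, 2 := by
    refine (Polynomial.natDegree_prod_le _ _).trans ?_
    exact Finset.sum_le_sum fun j _ => nd_lin2 _ _ _
  simp only [Polynomial.natDegree_C, Finset.sum_const, card_univ, Fintype.card_fin,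
    smul_eq_mul, mul_comm] at h1 ⊢
  omega

noncomputable def polyR (n : ℕ) (t t1 t2 : ℂ) : ℂ[X] :=
  ∏ j ∈ Finset.range n,
    ((1 - C (t ^ j * t1) * X) * (1 - C (t ^ j * t2) * X) * C (1 - t ^ j * t1 * t2))

lemma polyR_eval (n : ℕ) (t t1 t2 : ℂ) (s : ℂ) :
    (polyR n t t1 t2).eval s = Rprod n t s t1 t2 := by
  rw [polyR, Rprod, Polynomial.eval_prod]
  refine Finset.prod_congr rfl fun j _ => ?_
  simp only [Polynomial.eval_mul, Polynomial.eval_sub, Polynomial.eval_one, Polynomial.eval_C,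
    Polynomial.eval_X]
  ring

lemma polyR_deg (n : ℕ) (t t1 t2 : ℂ) : (polyR n t t1 t2).natDegree ≤ 2 * n := by
  rw [polyR]
  refine (Polynomial.natDegree_prod_le _ _).trans ?_
  refine le_trans (Finset.sum_le_sum fun j _ => nd_lin2 (t ^ j * t1) (t ^ j * t2) _) ?_
  simp [mul_comm]

noncomputable def polyL2 (n : ℕ) (t t2 : ℂ) (z : Fin n → ℂ) : ℂ[X] :=
  ∑ ν : Fin n → Bool, C (pairP t (yv z ν)) *
    ∏ j, ((1 - C (yv z ν j) * X) *
      C ((1 - t2 * yv z ν j) / (1 - (yv z ν j) ^ 2)))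

lemma polyL2_eval (n : ℕ) (t t2 : ℂ) (z : Fin n → ℂ) (s : ℂ) :
    (polyL2 n t t2 z).eval s = Ssum n t 0 s t2 z := by
  rw [polyL2, Ssum, Polynomial.eval_finset_sum]
  refine Finset.sum_congr rfl fun ν _ => ?_
  rw [Polynomial.eval_mul, Polynomial.eval_C, Polynomial.eval_prod]
  congr 1
  refine Finset.prod_congr rfl fun j _ => ?_
  simp only [Polynomial.eval_mul, Polynomial.eval_sub, Polynomial.eval_one, Polynomial.eval_C,
    Polynomial.eval_X]
  rw [gfac]
  ring

lemma polyL2_deg (n : ℕ) (t t2 : ℂ) (z : Fin n → ℂ) :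
    (polyL2 n t t2 z).natDegree ≤ n := by
  rw [polyL2]
  refine Polynomial.natDegree_sum_le_of_forall_le _ _ fun ν _ => ?_
  refine Polynomial.natDegree_mul_le.trans ?_
  have h1 : (∏ j, ((1 - C (yv z ν j) * X) *
      C ((1 - t2 * yv z ν j) / (1 - (yv z ν j) ^ 2)))).natDegree ≤ ∑ _j : Fin n, 1 := by
    refine (Polynomial.natDegree_prod_le _ _).trans ?_
    exact Finset.sum_le_sum fun j _ => nd_lin1 _ _
  simp only [Polynomial.natDegree_C, Finset.sum_const, card_univ, Fintype.card_fin,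
    smul_eq_mul, mul_one] at h1 ⊢
  omega

noncomputable def polyR2 (n : ℕ) (t t2 : ℂ) : ℂ[X] :=
  ∏ j ∈ Finset.range n, ((1 - C (t ^ j * t2) * X) * C 1)

lemma polyR2_eval (n : ℕ) (t t2 : ℂ) (s : ℂ) :
    (polyR2 n t t2).eval s = Rprod n t 0 s t2 := by
  rw [polyR2, Rprod, Polynomial.eval_prod]
  refine Finset.prod_congr rfl fun j _ => ?_
  simp only [Polynomial.eval_mul, Polynomial.eval_sub, Polynomial.eval_one, Polynomial.eval_C,
    Polynomial.eval_X]
  ring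

lemma polyR2_deg (n : ℕ) (t t2 : ℂ) : (polyR2 n t t2).natDegree ≤ n := by
  rw [polyR2]
  refine (Polynomial.natDegree_prod_le _ _).trans ?_
  refine le_trans (Finset.sum_le_sum fun j _ => nd_lin1 (t ^ j * t2) 1) ?_
  simp

-- point families
noncomputable def pts {n : ℕ} (z : Fin n → ℂ) : Fin n × Bool → ℂ :=
  fun q => if q.2 then z q.1 else (z q.1)⁻¹

lemma pts_inj {n : ℕ} {z : Fin n → ℂ} (hz : Gen z) : Function.Injective (pts z) := by
  rintro ⟨j, b⟩ ⟨k, c⟩ h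
  simp only [pts] at h
  rcases eq_or_ne j k with rfl | hjk
  · have hbc : b = c := by
      by_contra hbc
      apply hz.2.1 j
      cases b <;> cases c <;>
        simp only [Bool.false_eq_true, ite_true, ite_false] at h
      · exact absurd rfl hbc
      · rw [sq]
        nth_rewrite 1 [← h]
        exact inv_mul_cancel₀ (hz.1 j)
      · rw [sq]
        nth_rewrite 1 [h]
        exact inv_mul_cancel₀ (hz.1 j)
      · exact absurd rfl hbc
    rw [hbc]
  · exfalso
    cases b <;> cases c <;>
      simp only [Bool.false_eq_true, ite_true, ite_false] at h
    · exact (hz.2.2 j k hjk).2 (by rw [← inv_inv (z j), h, inv_inv])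
    · exact (hz.2.2 j k hjk).1 (by rw [← h, mul_inv_cancel₀ (hz.1 j)])
    · exact (hz.2.2 j k hjk).1 (by rw [h, inv_mul_cancel₀ (hz.1 k)])
    · exact (hz.2.2 j k hjk).2 h

lemma optpts_inj {n : ℕ} {z : Fin n → ℂ} (hz : Gen z) :
    Function.Injective (fun o : Option (Fin n × Bool) => o.elim 0 (pts z)) := by
  rintro (_ | q1) (_ | q2) h
  · rfl
  · exact absurd h.symm (by simpa [pts] using hz.ne_zero q2.1 q2.2)
  · exact absurd h (by simpa [pts] using hz.ne_zero q1.1 q1.2)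
  · exact congrArg some (pts_inj hz h)

theorem key : ∀ (n : ℕ) (t t0 t1 t2 : ℂ) (z : Fin n → ℂ), Gen z →
    Ssum n t t0 t1 t2 z = Rprod n t t0 t1 t2 := by
  intro n
  induction n with
  | zero =>
    intro t t0 t1 t2 z hz
    rw [Ssum, Rprod]
    simp [pairP]
  | succ n IH =>
    intro t t0 t1 t2 z hz
    have hcard1 : n + 1 < Fintype.card (Fin (n + 1) × Bool) := by
      simp only [Fintype.card_prod, Fintype.card_fin, Fintype.card_bool]
      omega
    have hcard2 : 2 * (n + 1) < Fintype.card (Option (Fin (n + 1) × Bool)) := by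
      simp only [Fintype.card_option, Fintype.card_prod, Fintype.card_fin, Fintype.card_bool]
      omega
    have hpoint2 : ∀ i : Fin (n + 1) × Bool,
        (polyL2 (n + 1) t t2 z).eval (pts z i) = (polyR2 (n + 1) t t2).eval (pts z i) := by
      intro i
      rw [polyL2_eval, polyR2_eval, Ssum_symm01, Rprod_symm01]
      exact reduction IH t 0 t2 (pts z i) z hz i.1 i.2 rfl
    have step2 : ∀ s : ℂ, Ssum (n + 1) t 0 s t2 z = Rprod (n + 1) t 0 s t2 := by
      intro s
      have h := interp (pts_inj hz) _ _ (polyL2_deg (n + 1) t t2 z)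
        (polyR2_deg (n + 1) t t2) hcard1 hpoint2 s
      rwa [polyL2_eval, polyR2_eval] at h
    have hpoint3 : ∀ o : Option (Fin (n + 1) × Bool),
        (polyL (n + 1) t t1 t2 z).eval (o.elim 0 (pts z))
          = (polyR (n + 1) t t1 t2).eval (o.elim 0 (pts z)) := by
      rintro (_ | i)
      · rw [polyL_eval, polyR_eval]
        exact step2 t1
      · rw [polyL_eval, polyR_eval]
        exact reduction IH t t1 t2 (pts z i) z hz i.1 i.2 rfl
    have h := interp (optpts_inj hz) _ _ (polyL_deg (n + 1) t t1 t2 z)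
      (polyR_deg (n + 1) t t1 t2) hcard2 hpoint3 t0
    rwa [polyL_eval, polyR_eval] at h

lemma zpow_sgn (x : ℂ) (b : Bool) : x ^ sgn b = if b then x else x⁻¹ := by
  cases b <;> simp [sgn]

lemma zpow_neg_sgn (x : ℂ) (b : Bool) : x ^ (-sgn b) = (if b then x else x⁻¹)⁻¹ := by
  cases b <;> simp [sgn]

lemma zpow_two_sgn (x : ℂ) (b : Bool) : x ^ (2 * sgn b) = (if b then x else x⁻¹) ^ 2 := by
  cases b <;> simp only [sgn, Bool.false_eq_true, ite_false, ite_true]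
  · rw [show ((2:ℤ) * -1) = ((-2):ℤ) by ring, zpow_neg, inv_pow, ← zpow_natCast]
    norm_num
  · rw [show ((2:ℤ) * 1) = ((2:ℕ) : ℤ) by ring, zpow_natCast]

end AuxBC


theorem stmt14' (N : ℕ) (t t0 t1 t2 : ℂ) (z : Fin N → ℂ)
    (hz0 : ∀ j, z j ≠ 0)
    (hz1 : ∀ j, (z j) ^ 2 ≠ 1)
    (hz2 : ∀ j k : Fin N, j < k → ∀ a b : ℤ, (a = 1 ∨ a = -1) → (b = 1 ∨ b = -1) →
      (z j) ^ a * (z k) ^ b ≠ 1) :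
    (∑ ν : Fin N → Bool,
        (∏ j : Fin N, ∏ k : Fin N, if j < k then
            (1 - t * (z j) ^ sgn (ν j) * (z k) ^ sgn (ν k)) /
              (1 - (z j) ^ sgn (ν j) * (z k) ^ sgn (ν k))
          else 1) *
        ∏ j : Fin N,
          (1 - t ^ (N - 1) * t0 * t1 * t2 * (z j) ^ (-sgn (ν j))) *
            (1 - t0 * (z j) ^ sgn (ν j)) * (1 - t1 * (z j) ^ sgn (ν j)) *
            (1 - t2 * (z j) ^ sgn (ν j)) / (1 - (z j) ^ (2 * sgn (ν j))))
      = ∏ j ∈ Finset.range N,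
          (1 - t ^ j * t0 * t1) * (1 - t ^ j * t0 * t2) * (1 - t ^ j * t1 * t2) := by
  have hGen : AuxBC.Gen z := by
    refine ⟨hz0, hz1, fun j k hjk => ?_⟩
    rcases lt_or_gt_of_ne hjk with h | h
    · constructor
      · have h' := hz2 j k h 1 1 (Or.inl rfl) (Or.inl rfl)
        simpa using h'
      · have h' := hz2 j k h 1 (-1) (Or.inl rfl) (Or.inr rfl)
        simp only [zpow_one, zpow_neg_one] at h'
        intro hc
        exact h' (by rw [hc, mul_inv_cancel₀ (hz0 k)])
    · constructor
      · have h' := hz2 k j h 1 1 (Or.inl rfl) (Or.inl rfl)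
        simp only [zpow_one] at h'
        intro hc
        exact h' (by rwa [mul_comm] at hc)
      · have h' := hz2 k j h 1 (-1) (Or.inl rfl) (Or.inr rfl)
        simp only [zpow_one, zpow_neg_one] at h'
        intro hc
        exact h' (by rw [hc, mul_inv_cancel₀ (hz0 k)])
  have hmain := AuxBC.key N t t0 t1 t2 z hGen
  have hconv : (∑ ν : Fin N → Bool,
        (∏ j : Fin N, ∏ k : Fin N, if j < k then
            (1 - t * (z j) ^ sgn (ν j) * (z k) ^ sgn (ν k)) /
              (1 - (z j) ^ sgn (ν j) * (z k) ^ sgn (ν k))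
          else 1) *
        ∏ j : Fin N,
          (1 - t ^ (N - 1) * t0 * t1 * t2 * (z j) ^ (-sgn (ν j))) *
            (1 - t0 * (z j) ^ sgn (ν j)) * (1 - t1 * (z j) ^ sgn (ν j)) *
            (1 - t2 * (z j) ^ sgn (ν j)) / (1 - (z j) ^ (2 * sgn (ν j))))
      = AuxBC.Ssum N t t0 t1 t2 z := by
    rw [AuxBC.Ssum]
    refine Finset.sum_congr rfl fun ν _ => ?_
    have hy : ∀ j, z j ^ sgn (ν j) = AuxBC.yv z ν j := fun j => AuxBC.zpow_sgn (z j) (ν j)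
    have hyn : ∀ j, z j ^ (-sgn (ν j)) = (AuxBC.yv z ν j)⁻¹ :=
      fun j => AuxBC.zpow_neg_sgn (z j) (ν j)
    have hy2 : ∀ j, z j ^ (2 * sgn (ν j)) = (AuxBC.yv z ν j) ^ 2 :=
      fun j => AuxBC.zpow_two_sgn (z j) (ν j)
    congr 1
    · rw [AuxBC.pairP]
      refine Finset.prod_congr rfl fun j _ => Finset.prod_congr rfl fun k _ => ?_
      by_cases hjk : j < k
      · rw [if_pos hjk, if_pos hjk, hy j, hy k]
      · rw [if_neg hjk, if_neg hjk]
    · refine Finset.prod_congr rfl fun j _ => ?_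
      rw [AuxBC.gfac, hy j, hyn j, hy2 j]
  rw [hconv, hmain, AuxBC.Rprod]


/-- The `BC_N`-type terminating summation identity: the sum over all `2^N` sign vectors
`ν ∈ {±1}^N` of
`∏_{j<k} (1 - t z_j^{ν_j} z_k^{ν_k})/(1 - z_j^{ν_j} z_k^{ν_k}) ·
 ∏_j (1 - t^{N-1} t₀t₁t₂ z_j^{-ν_j})(1-t₀z_j^{ν_j})(1-t₁z_j^{ν_j})(1-t₂z_j^{ν_j})/(1-z_j^{2ν_j})`
equals `∏_{j=1}^N (1-t^{j-1}t₀t₁)(1-t^{j-1}t₀t₂)(1-t^{j-1}t₁t₂)`;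
in particular it is independent of `z₁,…,z_N`. -/
theorem stmt14 (N : ℕ) (hN : 1 ≤ N) (t t0 t1 t2 : ℂ) (z : Fin N → ℂ)
    (hz0 : ∀ j, z j ≠ 0)
    (hz1 : ∀ j, (z j) ^ 2 ≠ 1)
    (hz2 : ∀ j k : Fin N, j < k → ∀ a b : ℤ, (a = 1 ∨ a = -1) → (b = 1 ∨ b = -1) →
      (z j) ^ a * (z k) ^ b ≠ 1) :
    (∑ ν : Fin N → Bool,
        (∏ j : Fin N, ∏ k : Fin N, if j < k then
            (1 - t * (z j) ^ sgn (ν j) * (z k) ^ sgn (ν k)) /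
              (1 - (z j) ^ sgn (ν j) * (z k) ^ sgn (ν k))
          else 1) *
        ∏ j : Fin N,
          (1 - t ^ (N - 1) * t0 * t1 * t2 * (z j) ^ (-sgn (ν j))) *
            (1 - t0 * (z j) ^ sgn (ν j)) * (1 - t1 * (z j) ^ sgn (ν j)) *
            (1 - t2 * (z j) ^ sgn (ν j)) / (1 - (z j) ^ (2 * sgn (ν j))))
      = ∏ j ∈ Finset.range N,
          (1 - t ^ j * t0 * t1) * (1 - t ^ j * t0 * t2) * (1 - t ^ j * t1 * t2) := by
  exact stmt14' N t t0 t1 t2 z hz0 hz1 hz2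
end
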